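/- Let a, b, c be real numbers with a + b + c = 0. Then there exist real numbers x, y, z such that x² + y² + z² = (a² + b² + c²)/2 and 2xyz = abc. Equivalently, there exists a real symmetric 3×3 matrix with zero diagonal whose characteristic polynomial equals that of diag(a, b, c). -/

import Mathlib

open Polynomial in
lemma cp1 (x y z : ℝ) : (Matrix.of !![(0:ℝ), x, y; x, 0, z; y, z, 0]).charpoly
    = X^3 - C (x^2+y^2+z^2) * X - C (2*(x*y*z)) := by
  show (!![(0:ℝ), x, y; x, 0, z; y, z, 0]).charpoly = _
  rw [Matrix.charpoly, Matrix.det_fin_three]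
  simp [Matrix.charmatrix_apply, Matrix.diagonal, map_mul, map_ofNat]
  ring

open Polynomial in
lemma cp2 (a b c : ℝ) : (Matrix.diagonal ![a, b, c]).charpoly
    = X^3 - C (a+b+c) * X^2 + C (a*b+b*c+c*a) * X - C (a*b*c) := by
  rw [Matrix.charpoly, Matrix.det_fin_three]
  simp [Matrix.charmatrix_apply, Matrix.diagonal]
  ring

lemma key (a b c x y z : ℝ) (h : a + b + c = 0)
    (h1 : x ^ 2 + y ^ 2 + z ^ 2 = (a ^ 2 + b ^ 2 + c ^ 2) / 2)
    (h2 : 2 * (x * y * z) = a * b * c) :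
    (Matrix.of !![(0:ℝ), x, y; x, 0, z; y, z, 0]).charpoly
        = (Matrix.diagonal ![a, b, c]).charpoly := by
  rw [cp1, cp2, h, h2, show x^2+y^2+z^2 = -(a*b+b*c+c*a) by linear_combination h1 + ((a+b+c)/2)*h]
  simp
  ring

theorem stmt_2 (a b c : ℝ) (h : a + b + c = 0) :
    ∃ x y z : ℝ,
      (x ^ 2 + y ^ 2 + z ^ 2 = (a ^ 2 + b ^ 2 + c ^ 2) / 2 ∧ 2 * (x * y * z) = a * b * c) ∧
      (Matrix.of !![(0:ℝ), x, y; x, 0, z; y, z, 0]).charpoly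
        = (Matrix.diagonal ![a, b, c]).charpoly := by
  have pick : ∃ x y z : ℝ,
      x ^ 2 + y ^ 2 + z ^ 2 = (a ^ 2 + b ^ 2 + c ^ 2) / 2 ∧ 2 * (x * y * z) = a * b * c := by
    rcases le_or_gt (b*c) 0 with hbc | hbc
    · have ht : Real.sqrt (-(b*c)/2) ^ 2 = -(b*c)/2 := Real.sq_sqrt (by linarith)
      exact ⟨a, Real.sqrt (-(b*c)/2), -Real.sqrt (-(b*c)/2),
        by linear_combination 2*ht + ((a-b-c)/2)*h, by linear_combination (-2*a)*ht⟩
    rcases le_or_gt (c*a) 0 with hca | hca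
    · have ht : Real.sqrt (-(c*a)/2) ^ 2 = -(c*a)/2 := Real.sq_sqrt (by linarith)
      exact ⟨b, Real.sqrt (-(c*a)/2), -Real.sqrt (-(c*a)/2),
        by linear_combination 2*ht + ((b-a-c)/2)*h, by linear_combination (-2*b)*ht⟩
    rcases le_or_gt (a*b) 0 with hab | hab
    · have ht : Real.sqrt (-(a*b)/2) ^ 2 = -(a*b)/2 := Real.sq_sqrt (by linarith)
      exact ⟨c, Real.sqrt (-(a*b)/2), -Real.sqrt (-(a*b)/2),
        by linear_combination 2*ht + ((c-a-b)/2)*h, by linear_combination (-2*c)*ht⟩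
    exfalso
    have h2 : (a+b+c)^2 = 0 := by rw [h]; ring
    nlinarith [sq_nonneg a, sq_nonneg b, sq_nonneg c]
  obtain ⟨x, y, z, h1, h2⟩ := pick
  exact ⟨x, y, z, ⟨h1, h2⟩, key a b c x y z h h1 h2⟩
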